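/- Let Σ = ⊕_{n∈ℕ} ℤ be the free abelian group on countably many generators. For every subgroup G ≤ Σ such that the quotient Σ/G is finitely generated, there exist subgroups H and F of Σ such that H ⊆ G, F is finitely generated, H ∩ F = 0, and H + F = Σ (so H is a direct summand of Σ with finitely generated complement, contained in G). -/

import Mathlib

/-- Every subgroup `G` of `Σ = ⊕_{n∈ℕ} ℤ` with finitely generated quotient `Σ/G`
contains a direct summand `H` of `Σ` with finitely generated complement `F`. -/
theorem stmt8 (G : AddSubgroup (ℕ →₀ ℤ))
    (hG : AddGroup.FG ((ℕ →₀ ℤ) ⧸ G)) :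
    ∃ H F : AddSubgroup (ℕ →₀ ℤ),
      H ≤ G ∧ F.FG ∧ H ⊓ F = ⊥ ∧ H ⊔ F = ⊤ := by
  classical
  set π : (ℕ →₀ ℤ) →+ (ℕ →₀ ℤ) ⧸ G := QuotientAddGroup.mk' G with hπdef
  have hπsurj : Function.Surjective π := QuotientAddGroup.mk'_surjective G
  obtain ⟨T, hTtop, hTfin⟩ := AddGroup.fg_iff.mp hG
  choose g hg using hπsurj
  set S : Finset ℕ := hTfin.toFinset.biUnion fun t => (g t).support with hSdef
  set F' : Submodule ℤ (ℕ →₀ ℤ) := Finsupp.supported ℤ ℤ (↑S : Set ℕ) with hF'def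
  have hF'fg : F'.FG := by
    rw [hF'def, Finsupp.supported_eq_span_single]
    exact Submodule.fg_span ((S.finite_toSet).image _)
  -- π restricted to F' is surjective
  have hsurj : ∀ y : (ℕ →₀ ℤ) ⧸ G, ∃ z ∈ F', π z = y := by
    intro y
    have hle : AddSubgroup.closure T ≤ F'.toAddSubgroup.map π := by
      rw [AddSubgroup.closure_le]
      intro t ht
      refine ⟨g t, ?_, hg t⟩
      refine (Finsupp.mem_supported ℤ _).2 ?_
      intro n hn
      simp only [hSdef, Finset.coe_biUnion, Set.mem_iUnion, Finset.mem_coe]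
      exact ⟨t, hTfin.mem_toFinset.2 ht, hn⟩
    have : y ∈ F'.toAddSubgroup.map π := hle (hTtop ▸ AddSubgroup.mem_top y)
    obtain ⟨z, hz, hzy⟩ := this
    exact ⟨z, hz, hzy⟩
  choose f hfF hfπ using fun n => hsurj (π (Finsupp.single n 1))
  set h : ℕ → (ℕ →₀ ℤ) := fun n => if n ∈ S then 0 else Finsupp.single n 1 - f n with hhdef
  have hhG : ∀ n, h n ∈ G := by
    intro n
    by_cases hn : n ∈ S
    · simpa [hhdef, hn] using zero_mem G
    · have : π (Finsupp.single n 1 - f n) = 0 := by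
        rw [map_sub, hfπ n, sub_self]
      have := AddMonoidHom.mem_ker.mpr this
      rw [hπdef, QuotientAddGroup.ker_mk'] at this
      simpa [hhdef, hn] using this
  set H' : Submodule ℤ (ℕ →₀ ℤ) := Submodule.span ℤ (Set.range h) with hH'def
  -- support of f n is in S
  have hfsupp : ∀ (x : ℕ →₀ ℤ), x ∈ F' → ∀ m, m ∉ S → x m = 0 := by
    intro x hx m hm
    by_contra hne
    exact hm ((Finsupp.mem_supported ℤ _).1 hx (Finsupp.mem_support_iff.2 hne))
  -- the retraction
  set L : (ℕ →₀ ℤ) →ₗ[ℤ] (ℕ →₀ ℤ) := Finsupp.linearCombination ℤ h with hLdef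
  have hfilter0 : ∀ (x : ℕ →₀ ℤ), x ∈ F' → x.filter (fun n => n ∉ S) = 0 := by
    intro x hx
    rw [Finsupp.filter_eq_zero_iff]
    intro m hm
    exact hfsupp x hx m hm
  have key : ∀ x ∈ H', L (x.filter (fun n => n ∉ S)) = x := by
    intro x hx
    induction hx using Submodule.span_induction with
    | mem y hy =>
      obtain ⟨n, rfl⟩ := hy
      by_cases hn : n ∈ S
      · simp only [hhdef, if_pos hn, Finsupp.filter_zero, map_zero]
      · have h1 : ((Finsupp.single n 1 : ℕ →₀ ℤ) - f n).filter (fun m => m ∉ S)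
            = Finsupp.single n 1 := by
          rw [Finsupp.filter_sub, Finsupp.filter_single_of_pos (p := fun m => m ∉ S) hn,
            hfilter0 _ (hfF n), sub_zero]
        have h2 : L (Finsupp.single n 1) = Finsupp.single n 1 - f n := by
          rw [hLdef, Finsupp.linearCombination_single, one_smul, hhdef]
          simp [if_neg hn]
        have h3 : h n = Finsupp.single n 1 - f n := by simp [hhdef, if_neg hn]
        rw [h3, h1, h2]
    | zero => rw [Finsupp.filter_zero, map_zero]
    | add y z _ _ hy hz => rw [Finsupp.filter_add, map_add, hy, hz]
    | smul c y _ hy => rw [Finsupp.filter_smul, map_smul, hy]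
  refine ⟨H'.toAddSubgroup, F'.toAddSubgroup, ?_, ?_, ?_, ?_⟩
  · intro x hx
    have : H' ≤ G.toIntSubmodule := by
      rw [hH'def, Submodule.span_le]
      rintro _ ⟨n, rfl⟩
      exact hhG n
    exact this hx
  · exact (Submodule.fg_iff_addSubgroup_fg F').1 hF'fg
  · rw [eq_bot_iff]
    intro x hx
    obtain ⟨hxH, hxF⟩ := hx
    have h0 : x.filter (fun n => n ∉ S) = 0 := hfilter0 x hxF
    have := key x hxH
    rw [h0, map_zero] at this
    simpa [AddSubgroup.mem_bot] using this.symm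
  · rw [eq_top_iff]
    intro x hx
    clear hx
    have hsingle : ∀ n : ℕ, Finsupp.single n 1 ∈ H'.toAddSubgroup ⊔ F'.toAddSubgroup := by
      intro n
      by_cases hn : n ∈ S
      · refine AddSubgroup.mem_sup_right ?_
        refine (Finsupp.mem_supported ℤ _).2 ?_
        intro m hm
        have := Finsupp.support_single_subset hm
        simp only [Finset.mem_singleton] at this
        simpa [this] using hn
      · have : Finsupp.single n 1 = h n + f n := by
          simp [hhdef, if_neg hn]
        rw [this]
        exact AddSubgroup.add_mem_sup (Submodule.subset_span ⟨n, rfl⟩) (hfF n)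
    induction x using Finsupp.induction_linear with
    | zero => exact zero_mem _
    | add a b ha hb => exact add_mem ha hb
    | single a b =>
      have : Finsupp.single a b = b • Finsupp.single a 1 := by
        simp [Finsupp.smul_single]
      rw [this]
      exact AddSubgroup.zsmul_mem _ (hsingle a) b
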